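/- The alternative composition of stable configuration structures is stable: if C₁ and C₂ are stable then C₁ + C₂ is stable. -/

import Mathlib

/-- A configuration structure: a set of (finite) configurations over events `E`
    together with a labeling function into actions `A`. -/
structure CS (E : Type*) (A : Type*) where
  Configs : Set (Set E)
  label : E → A

namespace CS

variable {E : Type*} {A : Type*}

/-- Stability: finiteness of configurations, rootedness, connectedness, and
    closure under bounded unions and intersections. -/
def Stable (C : CS E A) : Prop :=
  (∀ X ∈ C.Configs, X.Finite) ∧
  ∅ ∈ C.Configs ∧
  (∀ X ∈ C.Configs, X ≠ ∅ → ∃ e ∈ X, X \ {e} ∈ C.Configs) ∧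
  (∀ X ∈ C.Configs, ∀ Y ∈ C.Configs, ∀ Z ∈ C.Configs, X ∪ Y ⊆ Z →
    X ∪ Y ∈ C.Configs ∧ X ∩ Y ∈ C.Configs)

/-- `a`-labeled transition between configurations: one event labeled `a` is added. -/
def Trans (C : CS E A) (X : Set E) (a : A) (X' : Set E) : Prop :=
  X ∈ C.Configs ∧ X' ∈ C.Configs ∧ X ⊆ X' ∧ ∃ e, X' \ X = {e} ∧ C.label e = a

/-- Causality on a configuration `X`. -/
def le (C : CS E A) (X : Set E) (e₁ e₂ : E) : Prop :=
  e₁ ∈ X ∧ e₂ ∈ X ∧ ∀ Y ∈ C.Configs, Y ⊆ X → e₂ ∈ Y → e₁ ∈ Y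

/-- Strict causality. -/
def lt (C : CS E A) (X : Set E) (e₁ e₂ : E) : Prop :=
  C.le X e₁ e₂ ∧ e₁ ≠ e₂

/-- Concurrency of two distinct events in a configuration. -/
def co (C : CS E A) (X : Set E) (e₁ e₂ : E) : Prop :=
  e₁ ≠ e₂ ∧ ¬ C.lt X e₁ e₂ ∧ ¬ C.lt X e₂ e₁

/-- Conflict of two distinct events: no configuration contains both. -/
def Conflict (C : CS E A) (e₁ e₂ : E) : Prop :=
  e₁ ≠ e₂ ∧ ¬ ∃ Z ∈ C.Configs, e₁ ∈ Z ∧ e₂ ∈ Z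

/-- Backward ready multiset of a configuration, as a multiplicity function:
    the number of incoming `a`-labeled transitions. -/
noncomputable def brm (C : CS E A) (X : Set E) : A → ℕ :=
  fun a => Set.ncard {X' | C.Trans X' a X}

end CS

/-- Alternative composition of configuration structures: events are the tagged
disjoint union (`Sum.inl` = left tag `+l`, `Sum.inr` = right tag `+r`), and
every configuration comes entirely from one of the two components. -/
def csSum {E₁ E₂ A : Type*} (C₁ : CS E₁ A) (C₂ : CS E₂ A) : CS (E₁ ⊕ E₂) A where
  Configs := {Y | ∃ X ∈ C₁.Configs, Y = Sum.inl '' X} ∪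
             {Y | ∃ X ∈ C₂.Configs, Y = Sum.inr '' X}
  label := Sum.elim C₁.label C₂.label


lemma sum_aux_lr {E₁ E₂ : Type*} {S : Set E₁} {T : Set E₂}
    (h : Sum.inl '' S ⊆ Sum.inr '' T) : S = ∅ := by
  ext s
  simp only [Set.mem_empty_iff_false, iff_false]
  intro hs
  obtain ⟨t, _, ht⟩ := h ⟨s, hs, rfl⟩
  exact nomatch ht

lemma sum_aux_rl {E₁ E₂ : Type*} {S : Set E₂} {T : Set E₁}
    (h : Sum.inr '' S ⊆ Sum.inl '' T) : S = ∅ := by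
  ext s
  simp only [Set.mem_empty_iff_false, iff_false]
  intro hs
  obtain ⟨t, _, ht⟩ := h ⟨s, hs, rfl⟩
  exact nomatch ht

/-- the alternative composition of stable configuration
structures is stable. -/
theorem stmt14 {E₁ E₂ A : Type*} (C₁ : CS E₁ A) (C₂ : CS E₂ A)
    (h₁ : C₁.Stable) (h₂ : C₂.Stable) : (csSum C₁ C₂).Stable := by
  obtain ⟨f1, r1, c1, b1⟩ := h₁
  obtain ⟨f2, r2, c2, b2⟩ := h₂
  -- any config contained in a left-sided set is left-sided
  have keyL : ∀ X ∈ (csSum C₁ C₂).Configs, ∀ Z₀ : Set E₁, X ⊆ Sum.inl '' Z₀ →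
      ∃ X₀ ∈ C₁.Configs, X = Sum.inl '' X₀ ∧ X₀ ⊆ Z₀ := by
    rintro X (⟨X₀, hX₀, rfl⟩ | ⟨X₀, hX₀, rfl⟩) Z₀ hsub
    · exact ⟨X₀, hX₀, rfl, fun x hx => by
        obtain ⟨z, hz, hzx⟩ := hsub ⟨x, hx, rfl⟩
        exact (Sum.inl_injective hzx) ▸ hz⟩
    · rw [sum_aux_rl hsub]
      exact ⟨∅, r1, by simp, by simp⟩
  have keyR : ∀ X ∈ (csSum C₁ C₂).Configs, ∀ Z₀ : Set E₂, X ⊆ Sum.inr '' Z₀ →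
      ∃ X₀ ∈ C₂.Configs, X = Sum.inr '' X₀ ∧ X₀ ⊆ Z₀ := by
    rintro X (⟨X₀, hX₀, rfl⟩ | ⟨X₀, hX₀, rfl⟩) Z₀ hsub
    · rw [sum_aux_lr hsub]
      exact ⟨∅, r2, by simp, by simp⟩
    · exact ⟨X₀, hX₀, rfl, fun x hx => by
        obtain ⟨z, hz, hzx⟩ := hsub ⟨x, hx, rfl⟩
        exact (Sum.inr_injective hzx) ▸ hz⟩
  refine ⟨?_, ?_, ?_, ?_⟩
  · rintro X (⟨X₀, hX₀, rfl⟩ | ⟨X₀, hX₀, rfl⟩)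
    · exact (f1 X₀ hX₀).image _
    · exact (f2 X₀ hX₀).image _
  · exact Or.inl ⟨∅, r1, by simp⟩
  · rintro X (⟨X₀, hX₀, rfl⟩ | ⟨X₀, hX₀, rfl⟩) hne
    · have hne₀ : X₀ ≠ ∅ := by rintro rfl; simp at hne
      obtain ⟨e, he, hcfg⟩ := c1 X₀ hX₀ hne₀
      refine ⟨Sum.inl e, ⟨e, he, rfl⟩, Or.inl ⟨X₀ \ {e}, hcfg, ?_⟩⟩
      rw [Set.image_diff Sum.inl_injective, Set.image_singleton]
    · have hne₀ : X₀ ≠ ∅ := by rintro rfl; simp at hne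
      obtain ⟨e, he, hcfg⟩ := c2 X₀ hX₀ hne₀
      refine ⟨Sum.inr e, ⟨e, he, rfl⟩, Or.inr ⟨X₀ \ {e}, hcfg, ?_⟩⟩
      rw [Set.image_diff Sum.inr_injective, Set.image_singleton]
  · intro X hX Y hY Z hZ hsub
    rcases hZ with ⟨Z₀, hZ₀, rfl⟩ | ⟨Z₀, hZ₀, rfl⟩
    · obtain ⟨X₀, hX₀, rfl, hXZ⟩ := keyL X hX Z₀ (Set.union_subset_iff.mp hsub).1
      obtain ⟨Y₀, hY₀, rfl, hYZ⟩ := keyL Y hY Z₀ (Set.union_subset_iff.mp hsub).2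
      obtain ⟨hu, hi⟩ := b1 X₀ hX₀ Y₀ hY₀ Z₀ hZ₀ (Set.union_subset hXZ hYZ)
      constructor
      · exact Or.inl ⟨X₀ ∪ Y₀, hu, by rw [Set.image_union]⟩
      · exact Or.inl ⟨X₀ ∩ Y₀, hi, by rw [Set.image_inter Sum.inl_injective]⟩
    · obtain ⟨X₀, hX₀, rfl, hXZ⟩ := keyR X hX Z₀ (Set.union_subset_iff.mp hsub).1
      obtain ⟨Y₀, hY₀, rfl, hYZ⟩ := keyR Y hY Z₀ (Set.union_subset_iff.mp hsub).2
      obtain ⟨hu, hi⟩ := b2 X₀ hX₀ Y₀ hY₀ Z₀ hZ₀ (Set.union_subset hXZ hYZ)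
      constructor
      · exact Or.inr ⟨X₀ ∪ Y₀, hu, by rw [Set.image_union]⟩
      · exact Or.inr ⟨X₀ ∩ Y₀, hi, by rw [Set.image_inter Sum.inr_injective]⟩
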